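/- For α ∈ (0,2), let q_α(x) = exp(−|x|^α) and for a positive integer k let q_{α,k} be the k-fold convolution of q_α with itself (q_{α,1} = q_α, q_{α,k} = q_{α,k−1} ⋆ q_α). Then q_{α,k} is (k−1) times differentiable, its (k−1)-th derivative q_{α,k}^{(k−1)} is absolutely continuous with almost-everywhere derivative q_{α,k}^{(k)}; moreover, if α ∈ (0,1) then q_{α,k}^{(k−1)} is bounded, and if α ∈ [1,2) then q_{α,k}^{(k)} is bounded. -/

import Mathlib

open MeasureTheory Filter Set

noncomputable section

/-- `q_α(x) = exp(-|x|^α)`. -/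
def qa (α : ℝ) (x : ℝ) : ℝ := Real.exp (-|x| ^ α)

/-- `qak α k = q_{α,k+1}`, the `(k+1)`-fold convolution of `q_α` with itself:
`qak α 0 = q_α` and `qak α (k+1) = (qak α k) ⋆ q_α`. -/
def qak (α : ℝ) : ℕ → ℝ → ℝ
  | 0 => qa α
  | (k + 1) => fun x => ∫ t : ℝ, qak α k (x - t) * qa α t

section Helpers

variable {α : ℝ}

/-- a.e. derivative of `qa`. -/
def rr (α : ℝ) (x : ℝ) : ℝ := -(Real.sign x * α * |x| ^ (α - 1) * Real.exp (-|x| ^ α))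

variable {α : ℝ}

lemma qa_cont (hα : 0 < α) : Continuous (qa α) :=
  Real.continuous_exp.comp ((continuous_abs.rpow_const (fun _ => Or.inr hα.le)).neg)

lemma qa_nonneg (x : ℝ) : 0 ≤ qa α x := (Real.exp_pos _).le

lemma qa_le_one (x : ℝ) : |qa α x| ≤ 1 := by
  rw [abs_of_nonneg (qa_nonneg x)]
  exact Real.exp_le_one_iff.2 (neg_nonpos.2 (Real.rpow_nonneg (abs_nonneg x) _))

lemma measurable_rsign : Measurable Real.sign := by
  unfold Real.sign
  exact Measurable.ite (measurableSet_lt measurable_id measurable_const) measurable_const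
    (Measurable.ite (measurableSet_lt measurable_const measurable_id) measurable_const
      measurable_const)

lemma rr_meas : Measurable (rr α) := by
  have h1 : Measurable fun x : ℝ => |x| ^ (α - 1) := by fun_prop
  have h2 : Measurable fun x : ℝ => Real.exp (-|x| ^ α) := by fun_prop
  exact (((measurable_rsign.mul measurable_const).mul h1).mul h2).neg

lemma abs_rr_le (x : ℝ) : |rr α x| ≤ |α| * |x| ^ (α - 1) * Real.exp (-|x| ^ α) := by
  rw [rr, abs_neg, abs_mul, abs_mul, abs_mul]
  rw [abs_of_nonneg (Real.rpow_nonneg (abs_nonneg x) _),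
    abs_of_nonneg (Real.exp_pos _).le]
  have h1 : |Real.sign x| ≤ 1 := by
    rcases lt_trichotomy x 0 with h | h | h
    · rw [Real.sign_of_neg h]; norm_num
    · rw [h, Real.sign_zero]; norm_num
    · rw [Real.sign_of_pos h]; norm_num
  have h2 : (0:ℝ) ≤ |x| ^ (α - 1) * Real.exp (-|x| ^ α) :=
    mul_nonneg (Real.rpow_nonneg (abs_nonneg x) _) (Real.exp_pos _).le
  calc |Real.sign x| * |α| * (|x| ^ (α - 1)) * Real.exp (-|x| ^ α)
      = |Real.sign x| * (|α| * (|x| ^ (α - 1) * Real.exp (-|x| ^ α))) := by ring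
    _ ≤ 1 * (|α| * (|x| ^ (α - 1) * Real.exp (-|x| ^ α))) := by
        apply mul_le_mul_of_nonneg_right h1 (mul_nonneg (abs_nonneg α) h2)
    _ = |α| * |x| ^ (α - 1) * Real.exp (-|x| ^ α) := by ring

/-- derivative of `qa` away from 0 -/
lemma qa_hasDerivAt (hα : 0 < α) {x : ℝ} (hx : x ≠ 0) :
    HasDerivAt (qa α) (rr α x) x := by
  rcases hx.lt_or_gt with h | h
  · -- x < 0 : qa y = exp (-(-y)^α) near x
    have h1 : HasDerivAt (fun y : ℝ => -y) (-1) x := (hasDerivAt_neg x)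
    have h2 : HasDerivAt (fun y : ℝ => y ^ α) (α * (-x) ^ (α - 1)) (-x) :=
      Real.hasDerivAt_rpow_const (Or.inl (by linarith))
    have h3 : HasDerivAt (fun y : ℝ => (-y) ^ α) (α * (-x) ^ (α - 1) * (-1)) x :=
      h2.comp x h1
    have h4 := h3.neg.exp
    have h5 : (fun y : ℝ => Real.exp (-(-y) ^ α)) =ᶠ[nhds x] qa α := by
      filter_upwards [Iio_mem_nhds h] with y hy
      rw [qa, abs_of_neg hy]
    have h6 := h4.congr_of_eventuallyEq h5.symm
    refine h6.congr_deriv ?_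
    rw [rr, Real.sign_of_neg h, abs_of_neg h, Pi.neg_apply]
    ring
  · have h2 : HasDerivAt (fun y : ℝ => y ^ α) (α * x ^ (α - 1)) x :=
      Real.hasDerivAt_rpow_const (Or.inl (by linarith))
    have h4 := h2.neg.exp
    have h5 : (fun y : ℝ => Real.exp (-y ^ α)) =ᶠ[nhds x] qa α := by
      filter_upwards [Ioi_mem_nhds h] with y hy
      rw [qa, abs_of_pos hy]
    have h6 := h4.congr_of_eventuallyEq h5.symm
    refine h6.congr_deriv ?_
    rw [rr, Real.sign_of_pos h, abs_of_pos h, Pi.neg_apply]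
    ring

/-- integrability of `x ^ s * exp (-x ^ p)` on `(0,∞)` for any `p > 0`. -/
lemma integrableOn_rpow_mul_exp_neg_rpow' {p s : ℝ} (hp : 0 < p) (hs : -1 < s) :
    IntegrableOn (fun x : ℝ => x ^ s * Real.exp (-x ^ p)) (Ioi 0) := by
  have h0 : 0 < (s + 1) / p := div_pos (by linarith) hp
  have hG := Real.GammaIntegral_convergent h0
  have h := (integrableOn_Ioi_comp_rpow_iff'
    (fun y : ℝ => Real.exp (-y) * y ^ ((s + 1) / p - 1)) hp.ne').mpr hG
  refine h.congr_fun ?_ measurableSet_Ioi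
  intro x hx
  have hx0 : (0:ℝ) < x := hx
  have h1 : (x ^ p) ^ ((s + 1) / p - 1) = x ^ (p * ((s + 1) / p - 1)) :=
    (Real.rpow_mul hx0.le _ _).symm
  have h2 : p * ((s + 1) / p - 1) = s + 1 - p := by field_simp
  dsimp only
  rw [smul_eq_mul, h1, h2, ← mul_assoc, mul_comm (x ^ (p - 1)) _, mul_assoc,
    ← Real.rpow_add hx0]
  ring_nf

lemma integrable_even {f : ℝ → ℝ} (he : ∀ x, f (-x) = f x)
    (hm : AEStronglyMeasurable f (volume : Measure ℝ))
    (hi : IntegrableOn f (Ioi 0)) : Integrable f := by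
  have hIio : IntegrableOn f (Iio (0:ℝ)) := by
    have hpre : (Neg.neg : ℝ → ℝ) ⁻¹' (Iio 0) = Ioi 0 := by ext y; simp
    have hemb : MeasurableEmbedding (Neg.neg : ℝ → ℝ) :=
      (Homeomorph.neg ℝ).measurableEmbedding
    have hmap : (volume : Measure ℝ).restrict (Iio 0)
        = Measure.map Neg.neg ((volume : Measure ℝ).restrict (Ioi 0)) := by
      conv_lhs => rw [← Measure.neg_eq_self (volume : Measure ℝ)]
      rw [Measure.neg_def, Measure.restrict_map measurable_neg measurableSet_Iio, hpre]
    rw [IntegrableOn, hmap, hemb.integrable_map_iff]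
    have hfe : (f ∘ (Neg.neg : ℝ → ℝ)) = f := by funext y; exact he y
    rw [hfe]
    exact hi
  have h0 : IntegrableOn f ({(0:ℝ)}) := by
    rw [IntegrableOn, Measure.restrict_eq_zero.mpr (measure_singleton 0)]
    exact integrable_zero_measure
  have h3 : IntegrableOn f ({(0:ℝ)} ∪ {(0:ℝ)}ᶜ) := by
    refine h0.union ?_
    rw [← Iio_union_Ioi]
    exact hIio.union hi
  rwa [Set.union_compl_self, integrableOn_univ] at h3

lemma qa_integrable (hα : 0 < α) : Integrable (qa α) := by
  refine integrable_even (fun x => by rw [qa, qa, abs_neg]) (qa_cont hα).aestronglyMeasurable ?_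
  have h := integrableOn_rpow_mul_exp_neg_rpow' hα (by norm_num : (-1:ℝ) < 0)
  refine h.congr_fun ?_ measurableSet_Ioi
  intro x hx
  have hx0 : (0:ℝ) < x := hx
  dsimp only
  rw [qa, abs_of_pos hx0, Real.rpow_zero, one_mul]

lemma rr_integrable (hα : 0 < α) : Integrable (rr α) := by
  have hg : Integrable (fun x : ℝ => |α| * (|x| ^ (α - 1) * Real.exp (-|x| ^ α))) := by
    refine Integrable.const_mul ?_ _
    refine integrable_even (fun x => by rw [abs_neg]) ?_ ?_
    · apply (Measurable.aestronglyMeasurable ?_)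
      fun_prop
    · have h := integrableOn_rpow_mul_exp_neg_rpow' hα (by linarith : (-1:ℝ) < α - 1)
      refine h.congr_fun ?_ measurableSet_Ioi
      intro x hx
      have hx0 : (0:ℝ) < x := hx
      dsimp only
      rw [abs_of_pos hx0]
  refine hg.mono' rr_meas.aestronglyMeasurable ?_
  filter_upwards with x
  calc ‖rr α x‖ = |rr α x| := rfl
    _ ≤ |α| * |x| ^ (α - 1) * Real.exp (-|x| ^ α) := abs_rr_le x
    _ = |α| * (|x| ^ (α - 1) * Real.exp (-|x| ^ α)) := by ring

lemma rr_bdd (hα1 : 1 ≤ α) (hα2 : α < 2) (x : ℝ) : |rr α x| ≤ α := by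
  have hα : 0 < α := by linarith
  have h := abs_rr_le (α := α) x
  rw [abs_of_pos hα] at h
  refine h.trans ?_
  set y := |x| with hy
  have hy0 : 0 ≤ y := abs_nonneg x
  rcases le_or_gt y 1 with hle | hlt
  · have h1 : y ^ (α - 1) ≤ 1 := Real.rpow_le_one hy0 hle (by linarith)
    have h2 : Real.exp (-y ^ α) ≤ 1 :=
      Real.exp_le_one_iff.2 (neg_nonpos.2 (Real.rpow_nonneg hy0 _))
    calc α * y ^ (α - 1) * Real.exp (-y ^ α) ≤ α * 1 * 1 := by
          apply mul_le_mul (mul_le_mul_of_nonneg_left h1 hα.le) h2 (Real.exp_pos _).le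
          positivity
      _ = α := by ring
  · have h1 : y ^ (α - 1) ≤ y := by
      calc y ^ (α - 1) ≤ y ^ (1:ℝ) :=
            Real.rpow_le_rpow_of_exponent_le hlt.le (by linarith)
        _ = y := Real.rpow_one y
    have h2 : Real.exp (-y ^ α) ≤ Real.exp (-y) := by
      apply Real.exp_le_exp.2
      apply neg_le_neg
      calc y = y ^ (1:ℝ) := (Real.rpow_one y).symm
        _ ≤ y ^ α := Real.rpow_le_rpow_of_exponent_le hlt.le hα1
    have h3 : y * Real.exp (-y) ≤ 1 := by
      have h4 : y ≤ Real.exp y := by linarith [Real.add_one_le_exp y]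
      rw [Real.exp_neg]
      calc y * (Real.exp y)⁻¹ ≤ Real.exp y * (Real.exp y)⁻¹ := by
            apply mul_le_mul_of_nonneg_right h4 (inv_nonneg.2 (Real.exp_pos y).le)
        _ = 1 := mul_inv_cancel₀ (Real.exp_pos y).ne'
    calc α * y ^ (α - 1) * Real.exp (-y ^ α)
        ≤ α * y * Real.exp (-y) := by
          apply mul_le_mul (mul_le_mul_of_nonneg_left h1 hα.le) h2 (Real.exp_pos _).le
          positivity
      _ = α * (y * Real.exp (-y)) := by ring
      _ ≤ α * 1 := mul_le_mul_of_nonneg_left h3 hα.le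
      _ = α := mul_one α

lemma qa_ftc (hα : 0 < α) (a b : ℝ) :
    qa α b - qa α a = ∫ t in a..b, rr α t := by
  have hII : ∀ u v : ℝ, IntervalIntegrable (rr α) volume u v :=
    fun u v => (rr_integrable hα).intervalIntegrable
  have hkey : ∀ c : ℝ, 0 ≤ c → (∫ t in (0:ℝ)..c, rr α t) = qa α c - qa α 0 := by
    intro c hc
    apply intervalIntegral.integral_eq_sub_of_hasDeriv_right_of_le hc
      ((qa_cont hα).continuousOn)
      (fun x hx => (qa_hasDerivAt hα (ne_of_gt hx.1)).hasDerivWithinAt)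
      (hII 0 c)
  have hkey2 : ∀ c : ℝ, c ≤ 0 → (∫ t in c..(0:ℝ), rr α t) = qa α 0 - qa α c := by
    intro c hc
    apply intervalIntegral.integral_eq_sub_of_hasDeriv_right_of_le hc
      ((qa_cont hα).continuousOn)
      (fun x hx => (qa_hasDerivAt hα (ne_of_lt hx.2)).hasDerivWithinAt)
      (hII c 0)
  have hall : ∀ c : ℝ, (∫ t in (0:ℝ)..c, rr α t) = qa α c - qa α 0 := by
    intro c
    rcases le_or_gt 0 c with hc | hc
    · exact hkey c hc
    · rw [intervalIntegral.integral_symm c 0, hkey2 c hc.le]; ring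
  have hsplit := intervalIntegral.integral_add_adjacent_intervals (hII a 0) (hII 0 b)
  have h3 : (∫ t in a..(0:ℝ), rr α t) = -(qa α a - qa α 0) := by
    rw [intervalIntegral.integral_symm 0 a, hall a]
  rw [← hsplit, h3, hall b]
  ring


/-! ### Convolution helpers -/

/-- `conv f g x = ∫ f(x-t) g(t) dt`. -/
def conv (f g : ℝ → ℝ) (x : ℝ) : ℝ := ∫ t : ℝ, f (x - t) * g t

lemma conv_swap (f g : ℝ → ℝ) (x : ℝ) : conv f g x = ∫ t : ℝ, f t * g (x - t) := by
  rw [conv]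
  rw [← integral_sub_left_eq_self (fun t => f (x - t) * g t) volume x]
  congr 1
  funext t
  simp [sub_sub_cancel]

lemma conv_comm (f g : ℝ → ℝ) : conv f g = conv g f := by
  funext x
  rw [conv_swap, conv]
  congr 1; funext t; ring

lemma integrable_shift_mul {f g : ℝ → ℝ} (hf : AEStronglyMeasurable f (volume : Measure ℝ))
    {C : ℝ} (hC : ∀ y, |f y| ≤ C) (hg : Integrable g) (x : ℝ) :
    Integrable (fun t => f (x - t) * g t) := by
  refine hg.bdd_mul (c := C) ?_ ?_
  · exact hf.comp_measurePreserving (Measure.measurePreserving_sub_left volume x)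
  · exact Filter.Eventually.of_forall (fun t => hC (x - t))

lemma conv_bdd {f g : ℝ → ℝ} (hf : AEStronglyMeasurable f (volume : Measure ℝ))
    {C : ℝ} (hC : ∀ y, |f y| ≤ C) (hg : Integrable g) (x : ℝ) :
    |conv f g x| ≤ C * ∫ t, |g t| := by
  rw [conv]
  calc |∫ t : ℝ, f (x - t) * g t| ≤ ∫ t : ℝ, |f (x - t) * g t| :=
        by
          simp only [← Real.norm_eq_abs]
          exact norm_integral_le_integral_norm _
    _ ≤ ∫ t : ℝ, C * |g t| := by
        apply integral_mono (integrable_shift_mul hf hC hg x).abs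
          (hg.abs.const_mul C)
        intro t
        dsimp only
        rw [abs_mul]
        apply mul_le_mul_of_nonneg_right (hC _) (abs_nonneg _)
    _ = C * ∫ t, |g t| := integral_const_mul C _

lemma conv_integrable {f g : ℝ → ℝ} (hf : Integrable f) (hg : Integrable g) :
    Integrable (conv f g) := by
  have h := hf.integrable_convolution (ContinuousLinearMap.mul ℝ ℝ) hg
  apply h.congr
  filter_upwards with x
  rw [conv_swap]
  rfl

/-- continuity of `conv f g` when `f` is continuous and bounded and `g` integrable. -/
lemma conv_cont {f g : ℝ → ℝ} (hf : Continuous f) {C : ℝ} (hC : ∀ y, |f y| ≤ C)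
    (hg : Integrable g) : Continuous (conv f g) := by
  rw [continuous_iff_continuousAt]
  intro x₀
  rw [ContinuousAt]
  have : conv f g = fun x => ∫ t : ℝ, f (x - t) * g t := rfl
  rw [this]
  apply tendsto_integral_filter_of_dominated_convergence (fun t => C * |g t|)
  · filter_upwards with x
    exact ((hf.comp (continuous_const.sub continuous_id)).aestronglyMeasurable).mul
      hg.aestronglyMeasurable
  · filter_upwards with x
    filter_upwards with t
    rw [norm_mul]
    exact mul_le_mul_of_nonneg_right (hC _) (norm_nonneg _)
  · exact hg.abs.const_mul C
  · filter_upwards with t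
    exact Filter.Tendsto.mul_const _
      ((hf.continuousAt).comp ((continuous_id.sub continuous_const).tendsto x₀))


/-! ### FTC transfer through convolution -/

lemma ftc_transfer {g G u : ℝ → ℝ} (hg : Integrable g)
    (hG : AEStronglyMeasurable G (volume : Measure ℝ)) {C : ℝ} (hGb : ∀ y, |G y| ≤ C)
    (hu : Integrable u) (hftc : ∀ a b : ℝ, G b - G a = ∫ s in a..b, u s) :
    ∀ a b : ℝ, conv G g b - conv G g a = ∫ s in a..b, conv u g s := by
  have main : ∀ a b : ℝ, a ≤ b →
      conv G g b - conv G g a = ∫ s in a..b, conv u g s := by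
    intro a b hab
    have h1 : conv G g b - conv G g a = ∫ t : ℝ, (G (b - t) - G (a - t)) * g t := by
      rw [conv, conv, ← integral_sub (integrable_shift_mul hG hGb hg b)
        (integrable_shift_mul hG hGb hg a)]
      congr 1; funext t; ring
    have h2 : ∀ t : ℝ, G (b - t) - G (a - t) = ∫ s in a..b, u (s - t) := by
      intro t
      rw [hftc (a - t) (b - t)]
      exact (intervalIntegral.integral_comp_sub_right u t).symm
    have h3 : conv G g b - conv G g a = ∫ t : ℝ, (∫ s in a..b, u (s - t)) * g t := by
      rw [h1]; congr 1; funext t; rw [h2]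
    rw [h3, intervalIntegral.integral_of_le hab]
    have heq : ∀ t : ℝ, (∫ s in a..b, u (s - t)) * g t
        = ∫ s in Ioc a b, u (s - t) * g t := by
      intro t
      rw [intervalIntegral.integral_of_le hab, ← integral_mul_const]
    have hprod : Integrable (Function.uncurry fun (s t : ℝ) => u (s - t) * g t)
        ((volume.restrict (Ioc a b)).prod (volume : Measure ℝ)) := by
      have hfull : Integrable (fun z : ℝ × ℝ => g z.2 * u (z.1 - z.2))
          ((volume : Measure ℝ).prod volume) := by
        have := hg.convolution_integrand (ContinuousLinearMap.mul ℝ ℝ) hu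
        exact this
      have hres : Integrable (fun z : ℝ × ℝ => g z.2 * u (z.1 - z.2))
          (((volume : Measure ℝ).prod volume).restrict ((Ioc a b) ×ˢ univ)) :=
        hfull.restrict
      rw [← Measure.restrict_univ (μ := (volume : Measure ℝ)), Measure.prod_restrict,
        Measure.restrict_univ]
      apply hres.congr
      filter_upwards with z
      simp [Function.uncurry, mul_comm]
    have hswap := MeasureTheory.integral_integral_swap hprod
    -- hswap : ∫ s in Ioc, ∫ t, u (s-t) * g t = ∫ t, ∫ s in Ioc, u (s-t) * g t
    calc ∫ t : ℝ, (∫ s in a..b, u (s - t)) * g t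
        = ∫ t : ℝ, ∫ s in Ioc a b, u (s - t) * g t := by
          congr 1; funext t; exact heq t
      _ = ∫ s in Ioc a b, ∫ t : ℝ, u (s - t) * g t := hswap.symm
      _ = ∫ s in Ioc a b, conv u g s := rfl
  intro a b
  rcases le_total a b with hab | hba
  · exact main a b hab
  · have := main b a hba
    rw [intervalIntegral.integral_symm]
    linarith

/-- If `F` has continuous integrable FTC-density `u` then `F` is everywhere differentiable. -/
lemma hasDerivAt_of_ftc {F u : ℝ → ℝ} (hu : Integrable u) (huc : Continuous u)
    (hftc : ∀ a b : ℝ, F b - F a = ∫ s in a..b, u s) (x : ℝ) :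
    HasDerivAt F (u x) x := by
  have h1 : HasDerivAt (fun y => ∫ s in (0:ℝ)..y, u s) (u x) x := by
    apply intervalIntegral.integral_hasDerivAt_right hu.intervalIntegrable
    · exact huc.stronglyMeasurable.stronglyMeasurableAtFilter
    · exact huc.continuousAt
  have h2 : F = fun y => F 0 + ∫ s in (0:ℝ)..y, u s := by
    funext y
    have := hftc 0 y
    linarith
  rw [h2]
  exact h1.const_add (F 0)

/-- Differentiation under the convolution integral. -/
lemma conv_hasDerivAt {F g : ℝ → ℝ} (hg : Integrable g) (hFd : Differentiable ℝ F)
    {C C₂ : ℝ} (hF'b : ∀ y, |deriv F y| ≤ C) (hFb : ∀ y, |F y| ≤ C₂)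
    (hF'c : Continuous (deriv F)) (x₀ : ℝ) :
    HasDerivAt (conv F g) (conv (deriv F) g x₀) x₀ := by
  have hFc : Continuous F := hFd.continuous
  have key := hasDerivAt_integral_of_dominated_loc_of_deriv_le (μ := (volume : Measure ℝ))
    (F := fun (x t : ℝ) => F (x - t) * g t) (F' := fun (x t : ℝ) => deriv F (x - t) * g t)
    (x₀ := x₀) (bound := fun t => C * |g t|) (s := Metric.ball x₀ 1) (Metric.ball_mem_nhds x₀ one_pos)
    ?_ ?_ ?_ ?_ ?_ ?_
  · exact key.2
  · filter_upwards with x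
    exact ((hFc.comp (continuous_const.sub continuous_id)).aestronglyMeasurable).mul
      hg.aestronglyMeasurable
  · exact integrable_shift_mul hFc.aestronglyMeasurable hFb hg x₀
  · exact ((hF'c.comp (continuous_const.sub continuous_id)).aestronglyMeasurable).mul
      hg.aestronglyMeasurable
  · filter_upwards with t
    intro x _
    rw [norm_mul]
    exact mul_le_mul_of_nonneg_right (hF'b _) (norm_nonneg _)
  · exact hg.abs.const_mul C
  · filter_upwards with t
    intro x _
    have h1 : HasDerivAt (fun y : ℝ => F (y - t)) (deriv F (x - t)) x := by
      have h0 : HasDerivAt F (deriv F (x - t)) (x - t) :=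
        (hFd (x - t)).hasDerivAt
      have := h0.comp x ((hasDerivAt_id x).sub_const t)
      rw [mul_one] at this; exact this
    simpa using h1.mul_const (g t)


/-! ### Lebesgue differentiation -/

lemma uIoc_subset_closedBall {x y : ℝ} : Set.uIoc x y ⊆ Metric.closedBall x |y - x| := by
  intro t ht
  rw [Set.mem_uIoc] at ht
  rw [Metric.mem_closedBall, Real.dist_eq, abs_le]
  rcases abs_cases (y - x) with ⟨h1, h2⟩ | ⟨h1, h2⟩ <;>
    rcases ht with ⟨h3, h4⟩ | ⟨h3, h4⟩ <;> constructor <;> linarith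

lemma ae_hasDerivAt_of_ftc {F u : ℝ → ℝ} (hu : Integrable u)
    (hftc : ∀ a b : ℝ, F b - F a = ∫ s in a..b, u s) :
    ∀ᵐ x ∂(volume : Measure ℝ), HasDerivAt F (u x) x := by
  have hL := IsUnifLocDoublingMeasure.ae_tendsto_average_norm_sub
    (μ := (volume : Measure ℝ)) hu.locallyIntegrable 1
  filter_upwards [hL] with x hx
  -- average tendsto along radii
  have htend : Tendsto (fun r : ℝ => ⨍ y in Metric.closedBall x r, ‖u y - u x‖)
      (nhdsWithin 0 (Ioi 0)) (nhds 0) := by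
    refine hx (fun _ : ℝ => x) (fun r => r) Filter.tendsto_id ?_
    filter_upwards [self_mem_nhdsWithin] with r hr
    exact Metric.mem_closedBall_self (by rw [one_mul]; exact le_of_lt hr)
  rw [hasDerivAt_iff_tendsto_slope]
  have hslope : ∀ y : ℝ, y ≠ x →
      |slope F x y - u x| ≤ 2 * ⨍ s in Metric.closedBall x |y - x|, ‖u s - u x‖ := by
    intro y hy
    have hyx : (0:ℝ) < |y - x| := abs_pos.2 (sub_ne_zero.2 hy)
    have hnum : F y - F x - (y - x) * u x = ∫ s in x..y, (u s - u x) := by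
      rw [intervalIntegral.integral_sub hu.intervalIntegrable intervalIntegrable_const,
        ← hftc x y, intervalIntegral.integral_const, smul_eq_mul]
    have hsl : slope F x y - u x = (F y - F x - (y - x) * u x) / (y - x) := by
      rw [slope_def_field]
      have hne : y - x ≠ 0 := sub_ne_zero.2 hy
      field_simp
    have hbound : |∫ s in x..y, (u s - u x)|
        ≤ ∫ s in Metric.closedBall x |y - x|, ‖u s - u x‖ := by
      have hIcb : IntegrableOn (fun s => ‖u s - u x‖) (Metric.closedBall x |y - x|)
          (volume : Measure ℝ) := by
        exact (hu.integrableOn.sub (integrableOn_const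
          measure_closedBall_lt_top.ne)).norm
      calc |∫ s in x..y, (u s - u x)| ≤ ∫ s in Set.uIoc x y, ‖u s - u x‖ := by
            have h := intervalIntegral.norm_integral_le_integral_norm_uIoc
              (f := fun s => u s - u x) (a := x) (b := y) (μ := (volume : Measure ℝ))
            rwa [Real.norm_eq_abs] at h
        _ ≤ ∫ s in Metric.closedBall x |y - x|, ‖u s - u x‖ := by
            apply setIntegral_mono_set hIcb
            · filter_upwards with s using norm_nonneg _
            · exact HasSubset.Subset.eventuallyLE uIoc_subset_closedBall
    have hvol : (volume (Metric.closedBall x |y - x|)).toReal = 2 * |y - x| := by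
      rw [Real.volume_closedBall, ENNReal.toReal_ofReal (by positivity)]
    have havg : ∫ s in Metric.closedBall x |y - x|, ‖u s - u x‖
        = (2 * |y - x|) * ⨍ s in Metric.closedBall x |y - x|, ‖u s - u x‖ := by
      rw [MeasureTheory.setAverage_eq, smul_eq_mul, measureReal_def, hvol, ← mul_assoc,
        mul_inv_cancel₀ (by positivity), one_mul]
    calc |slope F x y - u x| = |∫ s in x..y, (u s - u x)| / |y - x| := by
          rw [hsl, hnum, abs_div]
      _ ≤ ((2 * |y - x|) * ⨍ s in Metric.closedBall x |y - x|, ‖u s - u x‖) / |y - x| := by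
          rw [← havg]
          gcongr
      _ = 2 * ⨍ s in Metric.closedBall x |y - x|, ‖u s - u x‖ := by
          field_simp
  -- now squeeze
  have hcomp : Tendsto (fun y : ℝ => |y - x|) (nhdsWithin x {x}ᶜ) (nhdsWithin 0 (Ioi 0)) := by
    rw [tendsto_nhdsWithin_iff]
    constructor
    · have hc : Continuous (fun y : ℝ => |y - x|) :=
        (continuous_id.sub continuous_const).abs
      have h0 : Tendsto (fun y : ℝ => |y - x|) (nhds x) (nhds 0) := by
        have := hc.tendsto x
        simpa using this
      exact h0.mono_left nhdsWithin_le_nhds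
    · filter_upwards [self_mem_nhdsWithin] with y hy
      exact abs_pos.2 (sub_ne_zero.2 hy)
  have h2avg : Tendsto (fun y : ℝ =>
      2 * ⨍ s in Metric.closedBall x |y - x|, ‖u s - u x‖) (nhdsWithin x {x}ᶜ) (nhds 0) := by
    have := (htend.comp hcomp).const_mul (2:ℝ)
    simpa using this
  rw [tendsto_iff_dist_tendsto_zero]
  apply squeeze_zero' ?_ ?_ h2avg
  · filter_upwards with y using dist_nonneg
  · filter_upwards [self_mem_nhdsWithin] with y hy
    rw [Real.dist_eq]
    exact hslope y hy


/-! ### The inductive invariant -/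

/-- The inductive invariant. -/
def QInv (α : ℝ) : ℕ → (ℝ → ℝ) → Prop
  | 0, F => Continuous F ∧ (∃ C, ∀ x, |F x| ≤ C) ∧ Integrable F ∧
      ∃ u : ℝ → ℝ, Integrable u ∧ (1 ≤ α → ∃ C, ∀ x, |u x| ≤ C) ∧
        ∀ a b : ℝ, F b - F a = ∫ t in a..b, u t
  | (m + 1), F => (∃ C, ∀ x, |F x| ≤ C) ∧ Integrable F ∧ Differentiable ℝ F ∧
      QInv α m (deriv F)

lemma inv_cont {m : ℕ} {F : ℝ → ℝ} (h : QInv α m F) : Continuous F := by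
  cases m with
  | zero => exact h.1
  | succ m => exact h.2.2.1.continuous

lemma inv_bdd {m : ℕ} {F : ℝ → ℝ} (h : QInv α m F) : ∃ C, ∀ x, |F x| ≤ C := by
  cases m with
  | zero => exact h.2.1
  | succ m => exact h.1

lemma inv_int {m : ℕ} {F : ℝ → ℝ} (h : QInv α m F) : Integrable F := by
  cases m with
  | zero => exact h.2.2.1
  | succ m => exact h.2.1

/-- The key step: convolving with `qa α` raises the invariant level. -/
lemma inv_step (hα : 0 < α) (hα2 : α < 2) : ∀ (m : ℕ) (F : ℝ → ℝ),
    QInv α m F → QInv α (m + 1) (conv F (qa α)) := by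
  intro m
  induction m with
  | zero =>
    rintro F ⟨hFc, ⟨C, hFb⟩, hFi, u, hu, hub, hftc⟩
    have hCnn : 0 ≤ C := (abs_nonneg _).trans (hFb 0)
    -- derivative of the convolution
    have hcont_uq : Continuous (conv u (qa α)) := by
      rw [conv_comm]
      exact conv_cont (qa_cont hα) qa_le_one hu
    have hftcG := ftc_transfer (qa_integrable hα) hFc.aestronglyMeasurable hFb hu hftc
    have hder : ∀ x, HasDerivAt (conv F (qa α)) (conv u (qa α) x) x :=
      hasDerivAt_of_ftc (conv_integrable hu (qa_integrable hα)) hcont_uq hftcG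
    have hderiv_eq : deriv (conv F (qa α)) = conv u (qa α) := by
      funext x; exact (hder x).deriv
    refine ⟨⟨C * ∫ t, |qa α t|, fun x =>
        conv_bdd hFc.aestronglyMeasurable hFb (qa_integrable hα) x⟩,
      conv_integrable hFi (qa_integrable hα),
      fun x => (hder x).differentiableAt, ?_⟩
    rw [hderiv_eq]
    refine ⟨hcont_uq, ?_, conv_integrable hu (qa_integrable hα), ?_⟩
    · refine ⟨1 * ∫ t, |u t|, fun x => ?_⟩
      rw [conv_comm]
      exact conv_bdd (qa_cont hα).aestronglyMeasurable qa_le_one hu x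
    · -- density for conv u (qa α) : it is conv (rr α) u after swapping
      refine ⟨conv (rr α) u, conv_integrable (rr_integrable hα) hu, ?_, ?_⟩
      · intro h1α
        refine ⟨α * ∫ t, |u t|, fun x => ?_⟩
        exact conv_bdd rr_meas.aestronglyMeasurable (rr_bdd h1α hα2) hu x
      · -- FTC for conv u (qa α)
        rw [conv_comm u (qa α)]
        exact ftc_transfer hu (qa_cont hα).aestronglyMeasurable qa_le_one
          (rr_integrable hα) (fun a b => qa_ftc hα a b)
  | succ m ih =>
    rintro F ⟨⟨C, hFb⟩, hFi, hFd, hinv⟩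
    obtain ⟨C', hF'b⟩ := inv_bdd hinv
    have hF'c : Continuous (deriv F) := inv_cont hinv
    have hder : ∀ x, HasDerivAt (conv F (qa α)) (conv (deriv F) (qa α) x) x :=
      fun x => conv_hasDerivAt (qa_integrable hα) hFd hF'b hFb hF'c x
    have hderiv_eq : deriv (conv F (qa α)) = conv (deriv F) (qa α) := by
      funext x; exact (hder x).deriv
    refine ⟨⟨C * ∫ t, |qa α t|, fun x =>
        conv_bdd hFd.continuous.aestronglyMeasurable hFb (qa_integrable hα) x⟩,
      conv_integrable hFi (qa_integrable hα),
      fun x => (hder x).differentiableAt, ?_⟩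
    rw [hderiv_eq]
    exact ih (deriv F) hinv


lemma inv_qak (hα : 0 < α) (hα2 : α < 2) : ∀ m : ℕ, QInv α m (qak α m) := by
  intro m
  induction m with
  | zero =>
    refine ⟨qa_cont hα, ⟨1, qa_le_one⟩, qa_integrable hα,
      rr α, rr_integrable hα, fun h1α => ⟨α, rr_bdd h1α hα2⟩, fun a b => qa_ftc hα a b⟩
  | succ m ih =>
    have : qak α (m + 1) = conv (qak α m) (qa α) := rfl
    rw [this]
    exact inv_step hα hα2 m (qak α m) ih

lemma inv_contDiff : ∀ (m : ℕ) (F : ℝ → ℝ), QInv α m F → ContDiff ℝ (m : ℕ) F := by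
  intro m
  induction m with
  | zero =>
    intro F h
    exact contDiff_zero.mpr h.1
  | succ m ih =>
    intro F h
    have hcast : ((m + 1 : ℕ) : WithTop ℕ∞) = (m : ℕ) + 1 := by push_cast; rfl
    rw [hcast, contDiff_succ_iff_deriv]
    refine ⟨h.2.2.1, ?_, ih (deriv F) h.2.2.2⟩
    intro htop
    exact absurd htop (by simp)

lemma inv_iterate : ∀ (m : ℕ) (F : ℝ → ℝ), QInv α m F → QInv α 0 (deriv^[m] F) := by
  intro m
  induction m with
  | zero => intro F h; exact h
  | succ m ih =>
    intro F h
    rw [Function.iterate_succ_apply]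
    exact ih (deriv F) h.2.2.2

end Helpers

/-- Lemma 3.3(1): `q_{α,k}` is `k-1` times differentiable, its `(k-1)`-th derivative is
absolutely continuous with almost-everywhere derivative `q_{α,k}^{(k)}`; moreover, if
`α ∈ (0,1)` then `q_{α,k}^{(k-1)}` is bounded, and if `α ∈ [1,2)` then `q_{α,k}^{(k)}`
is bounded.  (Here `qak α (k-1) = q_{α,k}`.) -/
theorem qak_smoothness (α : ℝ) (hα : α ∈ Set.Ioo (0 : ℝ) 2) (k : ℕ) (hk : 1 ≤ k) :
    ContDiff ℝ (k - 1 : ℕ) (qak α (k - 1)) ∧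
    ∃ D : ℝ → ℝ,
      (∀ᵐ x ∂(volume : Measure ℝ),
        HasDerivAt (iteratedDeriv (k - 1) (qak α (k - 1))) (D x) x) ∧
      (∀ a b : ℝ,
        iteratedDeriv (k - 1) (qak α (k - 1)) b
          - iteratedDeriv (k - 1) (qak α (k - 1)) a = ∫ t in a..b, D t) ∧
      (α < 1 → ∃ C : ℝ, ∀ x : ℝ, |iteratedDeriv (k - 1) (qak α (k - 1)) x| ≤ C) ∧
      (1 ≤ α → ∃ C : ℝ, ∀ x : ℝ, |D x| ≤ C) := by
  obtain ⟨hα0, hα2⟩ := hα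
  set m := k - 1 with hm
  have hinv := inv_qak hα0 hα2 m
  have hit : iteratedDeriv m (qak α m) = deriv^[m] (qak α m) := by
    rw [iteratedDeriv_eq_iterate]
  obtain ⟨hcont0, ⟨CB, hbdd0⟩, hint0, u, hu, hub, hftc⟩ := inv_iterate m (qak α m) hinv
  refine ⟨inv_contDiff m (qak α m) hinv, u, ?_, ?_, ?_, ?_⟩
  · rw [hit]
    exact ae_hasDerivAt_of_ftc hu hftc
  · intro a b; rw [hit]; exact hftc a b
  · intro _
    exact ⟨CB, fun x => by rw [hit]; exact hbdd0 x⟩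
  · exact hub

end
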